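/- Let F and G be connected graphs and let G be a k-fold cover of F. Then γ_c(G) ≤ k·(γ_c(F) + 2) − 2. -/

import Mathlib

/-- `π` is a covering projection from `G` onto `F`: it is surjective and maps the
neighbourhood of each vertex `v` of `G` bijectively onto the neighbourhood of `π v` in `F`. -/
def IsCover {V W : Type*} (G : SimpleGraph V) (F : SimpleGraph W) (π : V → W) : Prop :=
  Function.Surjective π ∧ ∀ v : V, Set.BijOn π (G.neighborSet v) (F.neighborSet (π v))

/-- The covering projection `π` is `k`-fold: every fiber has exactly `k` elements. -/
def IsKFold {V W : Type*} (π : V → W) (k : ℕ) : Prop :=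
  ∀ u : W, Nat.card (π ⁻¹' {u}) = k

/-- `S` is a dominating set of `F`. -/
def IsDominatingSet {V : Type*} (F : SimpleGraph V) (S : Set V) : Prop :=
  ∀ v ∉ S, ∃ u ∈ S, F.Adj v u

/-- The domination number `γ(F)`. -/
noncomputable def dominationNumber {V : Type*} (F : SimpleGraph V) : ℕ :=
  sInf {n | ∃ S : Set V, IsDominatingSet F S ∧ S.ncard = n}

/-- `S` is a total dominating set of `F`. -/
def IsTotalDominatingSet {V : Type*} (F : SimpleGraph V) (S : Set V) : Prop :=
  ∀ v : V, ∃ u ∈ S, F.Adj v u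

/-- The total domination number `γ_t(F)`. -/
noncomputable def totalDominationNumber {V : Type*} (F : SimpleGraph V) : ℕ :=
  sInf {n | ∃ S : Set V, IsTotalDominatingSet F S ∧ S.ncard = n}

/-- `S` is a connected dominating set of `F`. -/
def IsConnDominatingSet {V : Type*} (F : SimpleGraph V) (S : Set V) : Prop :=
  IsDominatingSet F S ∧ (F.induce S).Connected

/-- The connected domination number `γ_c(F)`. -/
noncomputable def connectedDominationNumber {V : Type*} (F : SimpleGraph V) : ℕ :=
  sInf {n | ∃ S : Set V, IsConnDominatingSet F S ∧ S.ncard = n}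


open SimpleGraph

section Aux

variable {V : Type*} {G : SimpleGraph V}

/-- There is a walk from `a` to `b` in `G` all of whose vertices lie in `A`. -/
def InA (G : SimpleGraph V) (A : Set V) (a b : V) : Prop :=
  ∃ p : G.Walk a b, ∀ w ∈ p.support, w ∈ A

namespace InA

variable {A B : Set V} {a b c : V}

lemma refl (ha : a ∈ A) : InA G A a a :=
  ⟨Walk.nil, by simpa using ha⟩

lemma mono (h : A ⊆ B) (hab : InA G A a b) : InA G B a b := by
  obtain ⟨p, hp⟩ := hab
  exact ⟨p, fun w hw => h (hp w hw)⟩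

lemma symm (hab : InA G A a b) : InA G A b a := by
  obtain ⟨p, hp⟩ := hab
  exact ⟨p.reverse, fun w hw => hp w (by simpa [Walk.support_reverse] using hw)⟩

lemma trans (hab : InA G A a b) (hbc : InA G A b c) : InA G A a c := by
  obtain ⟨p, hp⟩ := hab
  obtain ⟨q, hq⟩ := hbc
  refine ⟨p.append q, fun w hw => ?_⟩
  rw [Walk.support_append] at hw
  rcases List.mem_append.mp hw with h | h
  · exact hp w h
  · exact hq w (List.mem_of_mem_tail h)

lemma mem_left (hab : InA G A a b) : a ∈ A := by
  obtain ⟨p, hp⟩ := hab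
  exact hp a p.start_mem_support

lemma mem_right (hab : InA G A a b) : b ∈ A := by
  obtain ⟨p, hp⟩ := hab
  exact hp b p.end_mem_support

lemma of_adj (h : G.Adj a b) (ha : a ∈ A) (hb : b ∈ A) : InA G A a b := by
  refine ⟨Walk.cons h Walk.nil, fun w hw => ?_⟩
  simp only [Walk.support_cons, Walk.support_nil, List.mem_cons, List.mem_singleton] at hw
  rcases hw with rfl | hw
  · exact ha
  · rcases hw with rfl | hw
    · exact hb
    · simp at hw

end InA

lemma reachable_induce_of_walk {A : Set V} :
    ∀ {a b : V} (p : G.Walk a b), (∀ w ∈ p.support, w ∈ A) →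
      ∀ (ha : a ∈ A) (hb : b ∈ A), (G.induce A).Reachable ⟨a, ha⟩ ⟨b, hb⟩ := by
  intro a b p
  induction p with
  | nil => intro _ ha _; exact Reachable.refl _
  | @cons u v w h q ih =>
    intro hp ha hb
    have hv : v ∈ A := hp v (by simp [Walk.support_cons])
    have hq : ∀ x ∈ q.support, x ∈ A := fun x hx => hp x (by simp [Walk.support_cons, hx])
    have hadj : (G.induce A).Adj ⟨u, ha⟩ ⟨v, hv⟩ := h
    exact hadj.reachable.trans (ih hq hv hb)

lemma exists_walk_of_induce_walk {A : Set V} :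
    ∀ {a b : ↥A} (_ : (G.induce A).Walk a b),
      ∃ q : G.Walk (a : V) (b : V), ∀ w ∈ q.support, w ∈ A := by
  intro a b p
  induction p with
  | nil => exact ⟨Walk.nil, by simpa using a.2⟩
  | @cons u v w h q ih =>
    obtain ⟨q', hq'⟩ := ih
    refine ⟨Walk.cons h q', fun x hx => ?_⟩
    replace hx : x = ↑u ∨ x ∈ q'.support := List.mem_cons.mp hx
    rcases hx with rfl | hx
    · exact u.2
    · exact hq' x hx

lemma walk_getVert_mem_support {a b : V} (p : G.Walk a b) (i : ℕ) :
    p.getVert i ∈ p.support := by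
  by_cases h : i ≤ p.length
  · exact Walk.mem_support_iff_exists_getVert.mpr ⟨i, rfl, h⟩
  · rw [p.getVert_of_length_le (le_of_not_ge h)]
    exact p.end_mem_support

lemma dist_start_getVert_le (hc : G.Connected) :
    ∀ {a b : V} (p : G.Walk a b) (i : ℕ), G.dist a (p.getVert i) ≤ i := by
  intro a b p
  induction p with
  | nil => intro i; simp [Walk.getVert, SimpleGraph.dist_self]
  | @cons u v w h q ih =>
    intro i
    cases i with
    | zero => simp
    | succ i =>
      rw [Walk.getVert_cons_succ]
      calc G.dist u (q.getVert i) ≤ G.dist u v + G.dist v (q.getVert i) := hc.dist_triangle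
        _ ≤ 1 + i := by
            have h1 : G.dist u v = 1 := dist_eq_one_iff_adj.mpr h
            exact add_le_add (le_of_eq h1) (ih i)
        _ = i + 1 := by omega

lemma dist_getVert_end_le (hc : G.Connected) :
    ∀ {a b : V} (p : G.Walk a b) (i : ℕ), G.dist (p.getVert i) b ≤ p.length - i := by
  intro a b p
  induction p with
  | nil => intro i; simp [Walk.getVert, SimpleGraph.dist_self]
  | @cons u v w h q ih =>
    intro i
    cases i with
    | zero =>
      simpa using dist_le (Walk.cons h q)
    | succ i =>
      rw [Walk.getVert_cons_succ, Walk.length_cons]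
      have := ih i
      omega

/-- The key growing lemma: starting from a dominating set `D₀` each of whose points can reach
(within `D₀`) a point of `fib`, we can grow any superset `A` of `D₀` satisfying the invariant
into a set where every vertex is reachable from `x₁`, adding at most `2 * m` vertices, where `m`
bounds the number of unreached fiber points. -/
lemma grow [Fintype V] (hG : G.Connected) (D₀ : Set V) (x₁ : V) (hx₁ : x₁ ∈ D₀)
    (hdom : ∀ v ∉ D₀, ∃ u ∈ D₀, G.Adj v u)
    (fib : Set V) (hfib : fib ⊆ D₀)
    (hcomp : ∀ v ∈ D₀, ∃ x ∈ fib, InA G D₀ v x) :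
    ∀ (m : ℕ) (A : Set V), D₀ ⊆ A → (∀ v ∈ A, v ∈ D₀ ∨ InA G A x₁ v) →
      (fib \ {v | InA G A x₁ v}).ncard ≤ m →
      ∃ B : Set V, A ⊆ B ∧ B.ncard ≤ A.ncard + 2 * m ∧ ∀ v ∈ B, InA G B x₁ v := by
  classical
  intro m
  induction m with
  | zero =>
    intro A hDA hinv hm
    refine ⟨A, le_refl _, by omega, ?_⟩
    have hempty : fib \ {v | InA G A x₁ v} = ∅ := by
      rcases Set.eq_empty_or_nonempty (fib \ {v | InA G A x₁ v}) with h | h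
      · exact h
      · exfalso
        have := h.ncard_pos (Set.toFinite _)
        omega
    have hfibreach : ∀ x ∈ fib, InA G A x₁ x := by
      intro x hx
      by_contra hc
      have : x ∈ fib \ {v | InA G A x₁ v} := ⟨hx, hc⟩
      rw [hempty] at this
      exact this
    intro v hv
    rcases hinv v hv with hvD | hvR
    · obtain ⟨x, hxfib, hInA⟩ := hcomp v hvD
      exact (hfibreach x hxfib).trans (hInA.mono hDA).symm
    · exact hvR
  | succ m ih =>
    intro A hDA hinv hm
    by_cases hall : ∀ v ∈ A, InA G A x₁ v
    · exact ⟨A, le_refl _, by omega, hall⟩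
    push_neg at hall
    obtain ⟨y₀, hy₀A, hy₀⟩ := hall
    have hx₁A : x₁ ∈ A := hDA hx₁
    set dset : Set ℕ :=
      {n | ∃ x' y', InA G A x₁ x' ∧ (y' ∈ A ∧ ¬ InA G A x₁ y') ∧ G.dist x' y' = n} with hdset
    have hne : dset.Nonempty := ⟨G.dist x₁ y₀, x₁, y₀, InA.refl hx₁A, ⟨hy₀A, hy₀⟩, rfl⟩
    obtain ⟨x, y, hxR, ⟨hyA, hyNR⟩, hdxy⟩ := Nat.sInf_mem hne
    set d := sInf dset with hd
    have hmin : ∀ x' y', InA G A x₁ x' → y' ∈ A → ¬ InA G A x₁ y' → d ≤ G.dist x' y' :=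
      fun x' y' h1 h2 h3 => Nat.sInf_le ⟨x', y', h1, ⟨h2, h3⟩, rfl⟩
    -- d ≤ 3
    have hd3 : d ≤ 3 := by
      by_contra h4
      push_neg at h4
      obtain ⟨p, hp⟩ := hG.exists_walk_length_eq_dist x y
      rw [hdxy] at hp
      set z := p.getVert 2 with hz
      have hxz : G.dist x z ≤ 2 := dist_start_getVert_le hG p 2
      have hzy : G.dist z y ≤ d - 2 := by
        have := dist_getVert_end_le hG p 2
        rwa [hp] at this
      by_cases hzA : z ∈ A
      · by_cases hzR : InA G A x₁ z
        · have := hmin z y hzR hyA hyNR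
          omega
        · have := hmin x z hxR hzA hzR
          omega
      · have hzD : z ∉ D₀ := fun h => hzA (hDA h)
        obtain ⟨w, hwD, hadj⟩ := hdom z hzD
        have hwA : w ∈ A := hDA hwD
        have hzw : G.dist z w = 1 := dist_eq_one_iff_adj.mpr hadj
        by_cases hwR : InA G A x₁ w
        · have h1 : G.dist w y ≤ G.dist w z + G.dist z y := hG.dist_triangle
          have h2 : G.dist w z = 1 := by rw [SimpleGraph.dist_comm]; exact hzw
          have := hmin w y hwR hyA hyNR
          omega
        · have h1 : G.dist x w ≤ G.dist x z + G.dist z w := hG.dist_triangle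
          have := hmin x w hxR hwA hwR
          omega
    obtain ⟨p, hp⟩ := hG.exists_walk_length_eq_dist x y
    rw [hdxy] at hp
    set g₁ := p.getVert 1 with hg₁
    set g₂ := p.getVert 2 with hg₂
    set B' : Set V := A ∪ {g₁, g₂} with hB'
    have hAB' : A ⊆ B' := Set.subset_union_left
    have hg₁B' : g₁ ∈ B' := Or.inr (by simp)
    have hg₂B' : g₂ ∈ B' := Or.inr (by simp)
    have hsupp : ∀ w ∈ p.support, w ∈ B' := by
      intro w hw
      obtain ⟨i, hiv, hil⟩ := Walk.mem_support_iff_exists_getVert.mp hw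
      have hl3 : p.length ≤ 3 := by omega
      have hi3 : i ≤ 3 := le_trans hil hl3
      interval_cases i
      · rw [← hiv, Walk.getVert_zero]; exact hAB' (hxR.mem_right)
      · rw [← hiv]; exact hg₁B'
      · rw [← hiv]; exact hg₂B'
      · have : p.length = 3 := by omega
        rw [← hiv, ← this, Walk.getVert_length]
        exact hAB' hyA
    have hxB' : InA G B' x₁ x := hxR.mono hAB'
    have hxyB' : InA G B' x y := ⟨p, hsupp⟩
    have hyB' : InA G B' x₁ y := hxB'.trans hxyB'
    have hg₁R : InA G B' x₁ g₁ := by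
      refine hxB'.trans ⟨p.takeUntil g₁ (walk_getVert_mem_support p 1), fun w hw => ?_⟩
      exact hsupp w (p.support_takeUntil_subset _ hw)
    have hg₂R : InA G B' x₁ g₂ := by
      refine hxB'.trans ⟨p.takeUntil g₂ (walk_getVert_mem_support p 2), fun w hw => ?_⟩
      exact hsupp w (p.support_takeUntil_subset _ hw)
    -- the new invariant
    have hinv' : ∀ v ∈ B', v ∈ D₀ ∨ InA G B' x₁ v := by
      intro v hv
      rcases hv with hv | hv
      · rcases hinv v hv with h | h
        · exact Or.inl h
        · exact Or.inr (h.mono hAB')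
      · rcases hv with rfl | hv
        · exact Or.inr hg₁R
        · rcases hv with rfl
          exact Or.inr hg₂R
    -- the measure decreases
    have hyD : y ∈ D₀ := by
      rcases hinv y hyA with h | h
      · exact h
      · exact absurd h hyNR
    obtain ⟨xj, hxjfib, hxjInA⟩ := hcomp y hyD
    have hxjB' : InA G B' x₁ xj := hyB'.trans (hxjInA.mono (hDA.trans hAB'))
    have hxjnA : ¬ InA G A x₁ xj := by
      intro h
      exact hyNR (h.trans (hxjInA.mono hDA).symm)
    have hmem : xj ∈ fib \ {v | InA G A x₁ v} := ⟨hxjfib, hxjnA⟩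
    have hsub : (fib \ {v | InA G B' x₁ v}) ⊆ (fib \ {v | InA G A x₁ v}) \ {xj} := by
      intro w hw
      refine ⟨⟨hw.1, fun hc => hw.2 (hc.mono hAB')⟩, ?_⟩
      intro hc
      rw [Set.mem_singleton_iff] at hc
      subst hc
      exact hw.2 hxjB'
    have hm' : (fib \ {v | InA G B' x₁ v}).ncard ≤ m := by
      have h1 : (fib \ {v | InA G B' x₁ v}).ncard ≤ ((fib \ {v | InA G A x₁ v}) \ {xj}).ncard :=
        Set.ncard_le_ncard hsub (Set.toFinite _)
      have h2 : ((fib \ {v | InA G A x₁ v}) \ {xj}).ncard =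
          (fib \ {v | InA G A x₁ v}).ncard - 1 :=
        Set.ncard_diff_singleton_of_mem hmem
      have h3 : 0 < (fib \ {v | InA G A x₁ v}).ncard :=
        (Set.nonempty_of_mem hmem).ncard_pos (Set.toFinite _)
      omega
    obtain ⟨B, hB'B, hBcard, hBreach⟩ := ih B' (hDA.trans hAB') hinv' hm'
    refine ⟨B, hAB'.trans hB'B, ?_, hBreach⟩
    have hcard' : B'.ncard ≤ A.ncard + 2 := by
      calc B'.ncard ≤ A.ncard + ({g₁, g₂} : Set V).ncard := Set.ncard_union_le _ _
        _ ≤ A.ncard + 2 := by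
            have : ({g₁, g₂} : Set V).ncard ≤ 2 := by
              calc ({g₁, g₂} : Set V).ncard ≤ ({g₂} : Set V).ncard + 1 := Set.ncard_insert_le _ _
                _ ≤ 2 := by rw [Set.ncard_singleton]
            omega
    omega

end Aux

section Cover

variable {V W : Type*} {G : SimpleGraph V} {F : SimpleGraph W} {π : V → W}

lemma lift_walk (hπ : IsCover G F π) (S : Set W) (u₀ : W) :
    ∀ {u : W} (q : F.Walk u u₀), (∀ w ∈ q.support, w ∈ S) → ∀ {v : V}, π v = u →
      ∃ x : V, π x = u₀ ∧ InA G (π ⁻¹' S) v x := by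
  intro u q
  induction q with
  | nil =>
    intro hq v hv
    exact ⟨v, hv, InA.refl (by simp only [Set.mem_preimage, hv]; exact hq _ (by simp))⟩
  | @cons u u' w h q' ih =>
    intro hq v hv
    have huS : u ∈ S := hq u (by simp [Walk.support_cons])
    have hu'S : u' ∈ S := hq u' (by simp [Walk.support_cons, q'.start_mem_support])
    have h' : u' ∈ F.neighborSet (π v) := by rw [hv]; exact h
    obtain ⟨w', hw'adj, hw'u⟩ := (hπ.2 v).surjOn h'
    obtain ⟨x, hx, hInA⟩ := ih (fun a ha => hq a (by simp [Walk.support_cons, ha])) hw'u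
    refine ⟨x, hx, InA.trans (InA.of_adj hw'adj ?_ ?_) hInA⟩
    · simp only [Set.mem_preimage, hv]; exact huS
    · simp only [Set.mem_preimage, hw'u]; exact hu'S

end Cover

theorem connectedDominationNumber_le_of_isCover' {V W : Type*} [Fintype V] [Fintype W]
    (G : SimpleGraph V) (F : SimpleGraph W) (π : V → W) (k : ℕ)
    (hG : G.Connected) (hF : F.Connected)
    (hπ : IsCover G F π) (hk : IsKFold π k) :
    connectedDominationNumber G ≤ k * (connectedDominationNumber F + 2) - 2 := by
  classical
  -- k ≥ 1
  obtain ⟨v0⟩ := hG.nonempty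
  have hk1 : 1 ≤ k := by
    have h0 : 0 < Nat.card (π ⁻¹' {π v0}) := by
      have : Nonempty ↥(π ⁻¹' {π v0}) := ⟨⟨v0, rfl⟩⟩
      exact Nat.card_pos
    rw [hk (π v0)] at h0
    omega
  -- a minimum connected dominating set S of F
  have hFne : {n | ∃ S : Set W, IsConnDominatingSet F S ∧ S.ncard = n}.Nonempty := by
    refine ⟨(Set.univ : Set W).ncard, Set.univ, ⟨?_, ?_⟩, rfl⟩
    · intro v hv; exact absurd (Set.mem_univ v) hv
    · exact (F.induceUnivIso.connected_iff).mpr hF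
  obtain ⟨S, hSCDS, hScard⟩ := Nat.sInf_mem hFne
  set s := connectedDominationNumber F with hs
  -- setup
  obtain ⟨⟨u₀, hu₀S⟩⟩ := hSCDS.2.nonempty
  set D₀ : Set V := π ⁻¹' S with hD₀
  set fib : Set V := π ⁻¹' {u₀} with hfibdef
  have hfibD₀ : fib ⊆ D₀ := fun x hx => by
    simp only [hD₀, Set.mem_preimage]
    rw [show π x = u₀ from hx]
    exact hu₀S
  have hfibcard : fib.ncard = k := by rw [← Nat.card_coe_set_eq]; exact hk u₀
  have hfibne : fib.Nonempty := by
    rcases Set.eq_empty_or_nonempty fib with h | h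
    · rw [h, Set.ncard_empty] at hfibcard; omega
    · exact h
  obtain ⟨x₁, hx₁fib⟩ := hfibne
  have hx₁D₀ : x₁ ∈ D₀ := hfibD₀ hx₁fib
  -- D₀ dominates G
  have hdom : ∀ v ∉ D₀, ∃ u ∈ D₀, G.Adj v u := by
    intro v hv
    have hπv : π v ∉ S := hv
    obtain ⟨u, huS, hadj⟩ := hSCDS.1 (π v) hπv
    have : u ∈ F.neighborSet (π v) := hadj
    obtain ⟨w, hwadj, hwu⟩ := (hπ.2 v).surjOn this
    exact ⟨w, by simp only [hD₀, Set.mem_preimage, hwu]; exact huS, hwadj⟩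
  -- every vertex of D₀ can reach a fiber point within D₀
  have hcomp : ∀ v ∈ D₀, ∃ x ∈ fib, InA G D₀ v x := by
    intro v hv
    have hπvS : π v ∈ S := hv
    obtain ⟨q0⟩ := hSCDS.2.preconnected ⟨π v, hπvS⟩ ⟨u₀, hu₀S⟩
    obtain ⟨q, hq⟩ := exists_walk_of_induce_walk q0
    obtain ⟨x, hx, hInA⟩ := lift_walk hπ S ((⟨u₀, hu₀S⟩ : ↥S) : W) q hq (rfl : π v = ((⟨π v, hπvS⟩ : ↥S) : W))
    exact ⟨x, hx, hInA⟩
  -- initial measure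
  have hmeas : (fib \ {v | InA G D₀ x₁ v}).ncard ≤ k - 1 := by
    have hsub : fib \ {v | InA G D₀ x₁ v} ⊆ fib \ {x₁} := by
      intro w hw
      refine ⟨hw.1, ?_⟩
      intro hc
      rw [Set.mem_singleton_iff] at hc
      subst hc
      exact hw.2 (InA.refl hx₁D₀)
    calc (fib \ {v | InA G D₀ x₁ v}).ncard ≤ (fib \ {x₁}).ncard :=
          Set.ncard_le_ncard hsub (Set.toFinite _)
      _ = k - 1 := by rw [Set.ncard_diff_singleton_of_mem hx₁fib, hfibcard]
  -- grow
  obtain ⟨B, hD₀B, hBcard, hBreach⟩ := grow hG D₀ x₁ hx₁D₀ hdom fib hfibD₀ hcomp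
    (k - 1) D₀ (le_refl _) (fun v hv => Or.inl hv) hmeas
  · -- B is a connected dominating set of G
    have hBCDS : IsConnDominatingSet G B := by
      constructor
      · intro v hv
        have hvD₀ : v ∉ D₀ := fun h => hv (hD₀B h)
        obtain ⟨u, huD, hadj⟩ := hdom v hvD₀
        exact ⟨u, hD₀B huD, hadj⟩
      · rw [SimpleGraph.connected_iff]
        constructor
        · rintro ⟨a, ha⟩ ⟨b, hb⟩
          obtain ⟨pa, hpa⟩ := hBreach a ha
          obtain ⟨pb, hpb⟩ := hBreach b hb
          have h1 := reachable_induce_of_walk pa hpa (hD₀B hx₁D₀) ha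
          have h2 := reachable_induce_of_walk pb hpb (hD₀B hx₁D₀) hb
          exact h1.symm.trans h2
        · exact ⟨⟨x₁, hD₀B hx₁D₀⟩⟩
    have hle : connectedDominationNumber G ≤ B.ncard :=
      Nat.sInf_le ⟨B, hBCDS, rfl⟩
    -- cardinality of D₀
    have hD₀card : D₀.ncard = s * k := by
      have hfin : D₀.Finite := Set.toFinite _
      have hfinS : S.Finite := Set.toFinite _
      rw [Set.ncard_eq_toFinset_card D₀ hfin]
      have h1 : hfin.toFinset.card =
          ∑ u ∈ hfinS.toFinset, (hfin.toFinset.filter (fun v => π v = u)).card := by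
        refine Finset.card_eq_sum_card_fiberwise ?_
        intro x hx
        rw [Finset.mem_coe, Set.Finite.mem_toFinset] at hx ⊢
        exact hx
      rw [h1]
      have h2 : ∀ u ∈ hfinS.toFinset, (hfin.toFinset.filter (fun v => π v = u)).card = k := by
        intro u hu
        rw [Set.Finite.mem_toFinset] at hu
        have heq : hfin.toFinset.filter (fun v => π v = u) =
            (Set.toFinite (π ⁻¹' {u})).toFinset := by
          ext x
          simp only [Finset.mem_filter, Set.Finite.mem_toFinset, Set.mem_preimage,
            Set.mem_singleton_iff]
          constructor
          · rintro ⟨_, h⟩; exact h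
          · rintro h; exact ⟨show π x ∈ S by rw [h]; exact hu, h⟩
        rw [heq, ← Set.ncard_eq_toFinset_card _ _, ← Nat.card_coe_set_eq]
        exact hk u
      rw [Finset.sum_congr rfl h2, Finset.sum_const, smul_eq_mul,
        ← Set.ncard_eq_toFinset_card S hfinS, hScard]
      rfl
    have hfinal : B.ncard ≤ s * k + 2 * (k - 1) := by
      rw [hD₀card] at hBcard
      exact hBcard
    have hrw : k * (s + 2) = s * k + 2 * k := by ring
    omega

/-- If `G` and `F` are connected and `G` is a `k`-fold cover of `F`, then
`γ_c(G) ≤ k·(γ_c(F) + 2) − 2`. -/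
theorem connectedDominationNumber_le_of_isCover {V W : Type*} [Fintype V] [Fintype W]
    (G : SimpleGraph V) (F : SimpleGraph W) (π : V → W) (k : ℕ)
    (hG : G.Connected) (hF : F.Connected)
    (hπ : IsCover G F π) (hk : IsKFold π k) :
    connectedDominationNumber G ≤ k * (connectedDominationNumber F + 2) - 2 := by
  exact connectedDominationNumber_le_of_isCover' G F π k hG hF hπ hk
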